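/- There is no function ℓ : ℝ → ℝ that is simultaneously nonnegative, satisfies ℓ(z)+ℓ(−z)=K for all z with K a constant, classification-calibrated in the sense that inf_{α>0} ℓ(α) < inf_{α≤0} ℓ(α), and convex. -/

import Mathlib

theorem no_nonneg_convex_calibrated_symmetric :
    ¬ ∃ (ℓ : ℝ → ℝ) (K : ℝ),
      (∀ z : ℝ, 0 ≤ ℓ z) ∧
      (∀ z : ℝ, ℓ z + ℓ (-z) = K) ∧
      (sInf (ℓ '' {α : ℝ | 0 < α}) < sInf (ℓ '' {α : ℝ | α ≤ 0})) ∧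
      ConvexOn ℝ Set.univ ℓ := by
  rintro ⟨l, K, hpos, hsym, hcal, hconv⟩
  -- Key: for every α > 0, l 0 ≤ l α
  have key : ∀ α : ℝ, 0 < α → l 0 ≤ l α := by
    intro α hα
    by_contra h
    push_neg at h
    set δ := l 0 - l α with hδdef
    have hδ : 0 < δ := by linarith
    set c := K - l α with hcdef
    have hc : 0 ≤ c := by
      have h1 := hsym α
      have h2 := hpos (-α)
      simp only [hcdef]; linarith
    set M := α * c / δ with hMdef
    have hM0 : 0 ≤ M := by positivity
    have hden : 0 < M + α := by linarith
    have ha : (0:ℝ) ≤ M / (M + α) := by positivity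
    have hb : (0:ℝ) ≤ α / (M + α) := by positivity
    have hab : M / (M + α) + α / (M + α) = 1 := by field_simp
    have hcomb := hconv.2 (Set.mem_univ α) (Set.mem_univ (-M)) ha hb hab
    have hpt : (M / (M + α)) • α + (α / (M + α)) • (-M) = (0:ℝ) := by
      simp only [smul_eq_mul]
      field_simp
      ring
    rw [hpt] at hcomb
    simp only [smul_eq_mul] at hcomb
    have hKM : l (-M) ≤ K := by
      have h1 := hsym M
      have h2 := hpos M
      linarith
    have hstep : l 0 ≤ M / (M + α) * l α + α / (M + α) * K := by
      nlinarith [mul_le_mul_of_nonneg_left hKM hb]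
    -- hence δ ≤ (α/(M+α)) * c
    have hδle : δ ≤ α / (M + α) * c := by
      have h1 : M / (M + α) = 1 - α / (M + α) := by field_simp; ring
      rw [h1] at hstep
      simp only [hδdef, hcdef]
      nlinarith
    -- but (α/(M+α)) * c < δ
    have hlt : α / (M + α) * c < δ := by
      rw [div_mul_eq_mul_div, div_lt_iff₀ hden]
      have hδM : δ * M = α * c := by
        rw [hMdef]; field_simp
      nlinarith
    linarith
  -- l 0 is a lower bound of the image over positives
  have hlb : l 0 ≤ sInf (l '' {α : ℝ | 0 < α}) := by
    apply le_csInf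
    · exact ⟨l 1, 1, by norm_num, rfl⟩
    · rintro y ⟨α, hα, rfl⟩
      exact key α hα
  -- l 0 belongs to the image over nonpositives
  have hub : sInf (l '' {α : ℝ | α ≤ 0}) ≤ l 0 := by
    apply csInf_le
    · exact ⟨0, by rintro y ⟨α, _, rfl⟩; exact hpos α⟩
    · exact ⟨0, by norm_num, rfl⟩
  linarith
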